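/- Let U be a nearest-neighbour QCA on a ring of N ≥ 5 sites with Hilbert space H = ⨂_{n=0}^{N−1} ℂ^{d_n}. On the doubled system H ⊗ H, let S_n denote the unitary that swaps the two copies of the n-th tensor factor, and let S = ∏_n S_n be the global swap. Then (U ⊗ 1)(1 ⊗ U)* = S · ∏_n ((1 ⊗ U) S_n (1 ⊗ U)*); moreover the unitaries (1 ⊗ U) S_n (1 ⊗ U)* pairwise commute, and each of them is localized on the two copies of the sites {n−1, n, n+1}. In particular U ⊗ U* on the doubled system is a finite-depth circuit of local unitaries. -/

import Mathlib

open scoped Kronecker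

namespace QCA

variable {ι : Type} [Fintype ι] [DecidableEq ι]
variable (F : ι → Type) [∀ i, Fintype (F i)] [∀ i, DecidableEq (F i)]

/-- Configurations: the product basis labels of the lattice Hilbert space `⨂ i, ℂ^(F i)`. -/
abbrev Conf : Type := ∀ i, F i

/-- Operators on the lattice Hilbert space, as matrices in the product basis. -/
abbrev Ops : Type := Matrix (Conf F) (Conf F) ℂ

/-- `A` is localized on the region `R` if it has the form `B ⊗ 1` with respect to the
splitting `R | Rᶜ` of the tensor factors (entrywise characterization). -/
def Localized (A : Ops F) (R : Set ι) : Prop :=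
  (∀ x y : Conf F, A x y ≠ 0 → ∀ i ∉ R, x i = y i) ∧
  (∀ x y x' y' : Conf F, (∀ i ∈ R, x i = x' i) → (∀ i ∈ R, y i = y' i) →
      (∀ i ∉ R, x i = y i) → (∀ i ∉ R, x' i = y' i) → A x y = A x' y')

/-- Heisenberg evolution `A ↦ U* A U`. -/
noncomputable def heis (U A : Ops F) : Ops F := star U * A * U

/-- The support algebra `S(𝒮, R)`: the smallest subalgebra of operators localized on `R`
such that `𝒮` is contained in (the algebra generated by) it together with the full algebra
of operators localized on `Rᶜ`. -/
noncomputable def supportAlgebra (S : Set (Ops F)) (R : Set ι) : Subalgebra ℂ (Ops F) :=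
  sInf {C : Subalgebra ℂ (Ops F) |
    (C : Set (Ops F)) ⊆ {A | Localized F A R} ∧
    S ⊆ ↑(Algebra.adjoin ℂ ((C : Set (Ops F)) ∪ {A | Localized F A Rᶜ}))}

section Ring

variable {M : ℕ} (sector : ZMod M → Finset ι)

/-- `U` is a nearest-neighbour QCA for the ring of `M` (super)cells described by `sector`:
`U` is unitary, and conjugation by `U` maps operators localized on cell `k` to operators
localized on cells `{k-1, k, k+1}`. -/
def IsRingQCA (U : Ops F) : Prop :=
  U ∈ Matrix.unitaryGroup (Conf F) ℂ ∧
  ∀ (k : ZMod M) (A : Ops F), Localized F A ↑(sector k) →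
    Localized F (heis F U A) (↑(sector (k - 1)) ∪ ↑(sector k) ∪ ↑(sector (k + 1)))

/-- The even support algebra `R_k = S(u(A_k ⊗ A_{k+1}), A_{k-1} ⊗ A_k)` (`k` an even site). -/
noncomputable def REven (U : Ops F) (k : ZMod M) : Subalgebra ℂ (Ops F) :=
  supportAlgebra F (heis F U '' {A | Localized F A (↑(sector k) ∪ ↑(sector (k + 1)))})
    (↑(sector (k - 1)) ∪ ↑(sector k))

/-- The odd support algebra `R_{k+1} = S(u(A_k ⊗ A_{k+1}), A_{k+1} ⊗ A_{k+2})` (`k` even). -/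
noncomputable def ROdd (U : Ops F) (k : ZMod M) : Subalgebra ℂ (Ops F) :=
  supportAlgebra F (heis F U '' {A | Localized F A (↑(sector k) ∪ ↑(sector (k + 1)))})
    (↑(sector (k + 1)) ∪ ↑(sector (k + 2)))

/-- The Hilbert space dimension of the (super)cell `k`. -/
def siteDim (k : ZMod M) : ℕ := ∏ i ∈ sector k, Fintype.card (F i)

/-- `r` with `C ≅ M_r(ℂ)`, recovered as the square root of the linear dimension of `C`. -/
noncomputable def rdim (C : Subalgebra ℂ (Ops F)) : ℕ := Nat.sqrt (Module.finrank ℂ C)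

/-- The GNVW index `ind[U] = r_{2n} / d_{2n}`, evaluated at the even site `2n = 0`. -/
noncomputable def ringIndex (U : Ops F) : ℚ :=
  (rdim F (REven F sector U 0) : ℚ) / (siteDim F sector 0 : ℚ)

end Ring

/-- The standard ring structure: one site per cell. -/
def stdSector (N : ℕ) : ZMod N → Finset (ZMod N) := fun n => {n}

/-- The embedding of a one-site operator at site `i` into the lattice algebra. -/
noncomputable def embedAt (i : ι) (B : Matrix (F i) (F i) ℂ) : Ops F :=
  fun x y => (if ∀ j, j ≠ i → x j = y j then 1 else 0) * B (x i) (y i)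

/-- Pairing of configurations of two parallel lattices. -/
def confPairEquiv (G : ι → Type) [∀ i, Fintype (G i)] [∀ i, DecidableEq (G i)] :
    (Conf F × Conf G) ≃ Conf (fun i => F i × G i) where
  toFun p := fun i => (p.1 i, p.2 i)
  invFun x := (fun i => (x i).1, fun i => (x i).2)
  left_inv _ := rfl
  right_inv _ := rfl

/-- The tensor product `A ⊗ B` of operators on two parallel lattices, as an operator on the
lattice whose site `i` carries the qudit `F i × G i`. -/
noncomputable def tensorOps (G : ι → Type) [∀ i, Fintype (G i)] [∀ i, DecidableEq (G i)]
    (A : Ops F) (B : Ops G) : Ops (fun i => F i × G i) :=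
  Matrix.reindex (confPairEquiv F G) (confPairEquiv F G) (A ⊗ₖ B)



/-- The swap of the two copies of the `n`-th tensor factor of the doubled system. -/
noncomputable def swapAt (N : ℕ) [NeZero N] (d : ZMod N → ℕ) (n : ZMod N) : Ops (fun n : ZMod N => Fin (d n) × Fin (d n)) :=
  fun x y => if x n = Prod.swap (y n) ∧ ∀ m : ZMod N, m ≠ n → x m = y m then 1 else 0

/-- The global swap of the two copies of the doubled system. -/
noncomputable def globalSwap (N : ℕ) [NeZero N] (d : ZMod N → ℕ) : Ops (fun n : ZMod N => Fin (d n) × Fin (d n)) :=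
  fun x y => if ∀ m : ZMod N, x m = Prod.swap (y m) then 1 else 0

/-- `1 ⊗ U` on the doubled system. -/
noncomputable def oneTensor (N : ℕ) [NeZero N] (d : ZMod N → ℕ) (U : Ops (fun n : ZMod N => Fin (d n))) : Ops (fun n : ZMod N => Fin (d n) × Fin (d n)) :=
  tensorOps (fun n : ZMod N => Fin (d n)) (fun n : ZMod N => Fin (d n)) (1 : Ops (fun n : ZMod N => Fin (d n))) U

/-- `U ⊗ 1` on the doubled system. -/
noncomputable def tensorOne (N : ℕ) [NeZero N] (d : ZMod N → ℕ) (U : Ops (fun n : ZMod N => Fin (d n))) : Ops (fun n : ZMod N => Fin (d n) × Fin (d n)) :=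
  tensorOps (fun n : ZMod N => Fin (d n)) (fun n : ZMod N => Fin (d n)) U (1 : Ops (fun n : ZMod N => Fin (d n)))

/-- The conjugated swap `(1 ⊗ U) Sₙ (1 ⊗ U)*`. -/
noncomputable def conjSwapAt (N : ℕ) [NeZero N] (d : ZMod N → ℕ) (U : Ops (fun n : ZMod N => Fin (d n))) (n : ZMod N) :
    Ops (fun n : ZMod N => Fin (d n) × Fin (d n)) :=
  oneTensor N d U * swapAt N d n * star (oneTensor N d U)


section Aux
set_option linter.unusedSectionVars false

variable {ι : Type} [Fintype ι] [DecidableEq ι]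
variable {F : ι → Type} [∀ i, Fintype (F i)] [∀ i, DecidableEq (F i)]

/-- The permutation matrix of a permutation of configurations. -/
noncomputable def permMat (σ : Equiv.Perm (Conf F)) : Ops F :=
  fun x y => if x = σ y then 1 else 0

lemma permMat_mul (σ : Equiv.Perm (Conf F)) (A : Ops F) :
    permMat σ * A = fun x y => A (σ.symm x) y := by
  funext x y
  rw [Matrix.mul_apply]
  rw [Finset.sum_eq_single (σ.symm x)]
  · simp [permMat]
  · intro z _ hz
    have : x ≠ σ z := fun h => hz (by simp [h])
    simp [permMat, this]
  · simp

lemma mul_permMat (σ : Equiv.Perm (Conf F)) (A : Ops F) :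
    A * permMat σ = fun x y => A x (σ y) := by
  funext x y
  rw [Matrix.mul_apply]
  rw [Finset.sum_eq_single (σ y)]
  · simp [permMat]
  · intro z _ hz
    simp [permMat, hz]
  · simp

lemma permMat_mul_permMat (σ ρ : Equiv.Perm (Conf F)) :
    permMat σ * permMat ρ = permMat (ρ.trans σ) := by
  rw [permMat_mul]
  funext x y
  simp only [permMat, Equiv.trans_apply, Equiv.symm_apply_eq]
  congr 1

lemma permMat_refl : permMat (Equiv.refl (Conf F)) = 1 := by
  funext x y
  simp [permMat, Matrix.one_apply]
  congr 1

lemma star_permMat (σ : Equiv.Perm (Conf F)) : star (permMat σ) = permMat σ.symm := by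
  funext x y
  simp only [Matrix.star_apply, permMat]
  by_cases h : x = σ.symm y
  · rw [if_pos (show y = σ x by rw [h]; simp), if_pos h]; exact star_one _
  · rw [if_neg (show ¬ y = σ x from fun hy => h (by rw [hy]; simp)), if_neg h]; exact star_zero _

lemma permMat_mem_unitaryGroup (σ : Equiv.Perm (Conf F)) :
    permMat σ ∈ Matrix.unitaryGroup (Conf F) ℂ := by
  rw [Matrix.mem_unitaryGroup_iff]
  rw [star_permMat, permMat_mul_permMat]
  rw [show σ.symm.trans σ = Equiv.refl _ from Equiv.ext fun x => by simp, permMat_refl]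

end Aux
section Aux2
set_option linter.unusedSectionVars false

variable {ι : Type} [Fintype ι] [DecidableEq ι]
variable {F : ι → Type} [∀ i, Fintype (F i)] [∀ i, DecidableEq (F i)]
variable {G : ι → Type} [∀ i, Fintype (G i)] [∀ i, DecidableEq (G i)]

lemma localized_apply_eq' {A : Ops F} {R : Set ι} (hA : Localized F A R) {x y x' y' : Conf F}
    (hx : ∀ i ∈ R, x i = x' i) (hy : ∀ i ∈ R, y i = y' i)
    (hoff : ∀ i ∉ R, (x i = y i ↔ x' i = y' i)) : A x y = A x' y' := by
  by_cases h : ∀ i ∉ R, x i = y i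
  · exact hA.2 x y x' y' hx hy h (fun i hi => (hoff i hi).1 (h i hi))
  · push_neg at h
    obtain ⟨i, hi, hne⟩ := h
    have h1 : A x y = 0 := by
      by_contra h0
      exact hne (hA.1 x y h0 i hi)
    have h2 : A x' y' = 0 := by
      by_contra h0
      exact hne ((hoff i hi).2 (hA.1 x' y' h0 i hi))
    rw [h1, h2]

lemma localized_mono {A : Ops F} {R R' : Set ι} (hRR : R ⊆ R') (hA : Localized F A R) :
    Localized F A R' := by
  constructor
  · exact fun x y h0 i hi => hA.1 x y h0 i (fun hR => hi (hRR hR))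
  · intro x y x' y' hx hy hxy hx'y'
    refine localized_apply_eq' hA (fun i hi => hx i (hRR hi)) (fun i hi => hy i (hRR hi)) ?_
    intro i hi
    by_cases hi' : i ∈ R'
    · rw [hx i hi', hy i hi']
    · simp [hxy i hi', hx'y' i hi']

lemma localized_zero {R : Set ι} : Localized F (0 : Ops F) R :=
  ⟨fun x y h0 => absurd rfl h0, fun _ _ _ _ _ _ _ _ => rfl⟩

lemma localized_add {A B : Ops F} {R : Set ι} (hA : Localized F A R) (hB : Localized F B R) :
    Localized F (A + B) R := by
  constructor
  · intro x y h0 i hi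
    by_cases hA0 : A x y = 0
    · refine hB.1 x y ?_ i hi
      intro hB0
      exact h0 (by simp [Matrix.add_apply, hA0, hB0])
    · exact hA.1 x y hA0 i hi
  · intro x y x' y' hx hy hxy hx'y'
    simp only [Matrix.add_apply]
    rw [hA.2 x y x' y' hx hy hxy hx'y', hB.2 x y x' y' hx hy hxy hx'y']

lemma localized_sum {s : Finset α} {f : α → Ops F} {R : Set ι}
    (h : ∀ a ∈ s, Localized F (f a) R) : Localized F (∑ a ∈ s, f a) R := by
  classical
  induction s using Finset.induction_on with
  | empty => simpa using (localized_zero (R := R))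
  | @insert a s ha ih =>
    rw [Finset.sum_insert ha]
    exact localized_add (h a (Finset.mem_insert_self a s))
      (ih fun b hb => h b (Finset.mem_insert_of_mem hb))

lemma embedAt_localized (i : ι) (B : Matrix (F i) (F i) ℂ) :
    Localized F (embedAt F i B) {i} := by
  constructor
  · intro x y h0 j hj
    simp only [embedAt, ne_eq, mul_eq_zero, not_or] at h0
    rcases h0 with ⟨h0, -⟩
    by_contra hne
    exact h0 (by rw [if_neg (fun h => hne (h j (by simpa using hj)))])
  · intro x y x' y' hx hy hxy hx'y'
    have hcond : (∀ j, j ≠ i → x j = y j) ↔ (∀ j, j ≠ i → x' j = y' j) := by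
      constructor
      · intro _ j hj; exact hx'y' j (by simpa using hj)
      · intro _ j hj; exact hxy j (by simpa using hj)
    simp only [embedAt]
    rw [hx i rfl, hy i rfl, if_congr hcond rfl rfl]

end Aux2
section Aux3
set_option linter.unusedSectionVars false

variable {ι : Type} [Fintype ι] [DecidableEq ι]
variable {F : ι → Type} [∀ i, Fintype (F i)] [∀ i, DecidableEq (F i)]

lemma mul_embed_std (A : Ops F) (i : ι) (s t : F i) (x y : Conf F) :
    (A * embedAt F i (Matrix.single s t (1:ℂ))) x y
      = if y i = t then A x (Function.update y i s) else 0 := by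
  rw [Matrix.mul_apply]
  rw [Finset.sum_eq_single (Function.update y i s)]
  · simp only [embedAt, Matrix.single, Matrix.of_apply, Function.update_self]
    rw [if_pos (fun j hj => Function.update_of_ne hj s y), one_mul,
      if_congr (show (True ∧ t = y i) ↔ (y i = t) by simp [eq_comm]) rfl rfl,
      mul_ite, mul_one, mul_zero]
  · intro z _ hz
    simp only [embedAt, Matrix.single, Matrix.of_apply]
    by_cases h1 : ∀ j, j ≠ i → z j = y j
    · by_cases h2 : s = z i ∧ t = y i
      · exfalso
        apply hz
        funext j
        by_cases hj : j = i
        · subst hj; rw [Function.update_self, h2.1]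
        · rw [Function.update_of_ne hj, h1 j hj]
      · rw [if_neg h2]; ring
    · rw [if_neg h1]; ring
  · simp

lemma embed_std_mul (A : Ops F) (i : ι) (s t : F i) (x y : Conf F) :
    (embedAt F i (Matrix.single s t (1:ℂ)) * A) x y
      = if x i = s then A (Function.update x i t) y else 0 := by
  rw [Matrix.mul_apply]
  rw [Finset.sum_eq_single (Function.update x i t)]
  · simp only [embedAt, Matrix.single, Matrix.of_apply, Function.update_self]
    rw [if_pos (fun j hj => (Function.update_of_ne hj t x).symm), one_mul,
      if_congr (show (s = x i ∧ True) ↔ (x i = s) by simp [eq_comm]) rfl rfl,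
      ite_mul, one_mul, zero_mul]
  · intro z _ hz
    simp only [embedAt, Matrix.single, Matrix.of_apply]
    by_cases h1 : ∀ j, j ≠ i → x j = z j
    · by_cases h2 : s = x i ∧ t = z i
      · exfalso
        apply hz
        funext j
        by_cases hj : j = i
        · subst hj; rw [Function.update_self, h2.2]
        · rw [Function.update_of_ne hj, h1 j hj]
      · rw [if_neg h2]; ring
    · rw [if_neg h1]; ring
  · simp

lemma localized_of_commute {A : Ops F} {R : Set ι}
    (h : ∀ i ∉ R, ∀ s t : F i, Commute A (embedAt F i (Matrix.single s t (1:ℂ)))) :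
    Localized F A R := by
  classical
  have key : ∀ i ∉ R, ∀ (s t : F i) (x y : Conf F),
      (if y i = t then A x (Function.update y i s) else 0)
        = (if x i = s then A (Function.update x i t) y else 0) := by
    intro i hi s t x y
    calc (if y i = t then A x (Function.update y i s) else 0)
        = (A * embedAt F i (Matrix.single s t (1:ℂ))) x y := (mul_embed_std A i s t x y).symm
      _ = (embedAt F i (Matrix.single s t (1:ℂ)) * A) x y := by rw [(h i hi s t).eq]
      _ = _ := embed_std_mul A i s t x y
  have prop1 : ∀ x y : Conf F, A x y ≠ 0 → ∀ i ∉ R, x i = y i := by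
    intro x y h0 i hi
    by_contra hne
    have hk := key i hi (y i) (y i) x y
    rw [if_pos rfl, Function.update_eq_self, if_neg hne] at hk
    exact h0 hk
  have step : ∀ i ∉ R, ∀ (t : F i) (x y : Conf F), x i = y i →
      A x y = A (Function.update x i t) (Function.update y i t) := by
    intro i hi t x y hxy
    have hk := key i hi (x i) t x (Function.update y i t)
    rw [if_pos (Function.update_self i t y), if_pos rfl, Function.update_idem,
      hxy, Function.update_eq_self] at hk
    exact hk
  have multi : ∀ (s : Finset ι) (g x y : Conf F), (∀ i ∈ s, i ∉ R) → (∀ i ∈ s, x i = y i) →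
      A x y = A (fun i => if i ∈ s then g i else x i) (fun i => if i ∈ s then g i else y i) := by
    intro s
    induction s using Finset.induction_on with
    | empty => intro g x y _ _; simp
    | @insert a s ha ih =>
      intro g x y hR hxy
      have h1 : A x y = A (Function.update x a (g a)) (Function.update y a (g a)) :=
        step a (hR a (Finset.mem_insert_self a s)) (g a) x y (hxy a (Finset.mem_insert_self a s))
      have h2 := ih g (Function.update x a (g a)) (Function.update y a (g a))
        (fun i hi => hR i (Finset.mem_insert_of_mem hi))
        (fun i hi => by
          by_cases hia : i = a
          · subst hia; simp
          · rw [Function.update_of_ne hia, Function.update_of_ne hia]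
            exact hxy i (Finset.mem_insert_of_mem hi))
      have ex : ∀ (w : Conf F), (fun i => if i ∈ s then g i else Function.update w a (g a) i)
          = fun i => if i ∈ insert a s then g i else w i := by
        intro w
        funext j
        by_cases hj : j ∈ s
        · rw [if_pos hj, if_pos (Finset.mem_insert_of_mem hj)]
        · by_cases hja : j = a
          · subst hja
            rw [if_neg hj, Function.update_self, if_pos (Finset.mem_insert_self j s)]
          · rw [if_neg hj, Function.update_of_ne hja,
              if_neg (by simp [Finset.mem_insert, hja, hj])]
      rw [h1, h2, ex x, ex y]
  refine ⟨prop1, ?_⟩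
  intro x y x' y' hx hy hxy hx'y'
  have hs := multi (Finset.univ.filter (fun i => i ∉ R)) x' x y
    (fun i hi => (Finset.mem_filter.mp hi).2)
    (fun i hi => hxy i (Finset.mem_filter.mp hi).2)
  rw [hs]
  congr 1
  · funext j
    by_cases hj : j ∈ R
    · simp only [Finset.mem_filter, Finset.mem_univ, true_and]
      rw [if_neg (fun hc => hc hj)]
      exact hx j hj
    · simp [hj]
  · funext j
    by_cases hj : j ∈ R
    · simp only [Finset.mem_filter, Finset.mem_univ, true_and]
      rw [if_neg (fun hc => hc hj)]
      exact hy j hj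
    · simp only [Finset.mem_filter, Finset.mem_univ, true_and]
      rw [if_pos hj]
      exact hx'y' j hj

end Aux3
section Aux4
set_option linter.unusedSectionVars false

variable {ι : Type} [Fintype ι] [DecidableEq ι]
variable {F : ι → Type} [∀ i, Fintype (F i)] [∀ i, DecidableEq (F i)]
variable {G : ι → Type} [∀ i, Fintype (G i)] [∀ i, DecidableEq (G i)]

lemma tensorOps_apply (A : Ops F) (B : Ops G) (X Y : Conf (fun i => F i × G i)) :
    tensorOps F G A B X Y
      = A (fun i => (X i).1) (fun i => (Y i).1) * B (fun i => (X i).2) (fun i => (Y i).2) := rfl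

lemma tensorOps_mul (A C : Ops F) (B D : Ops G) :
    tensorOps F G A B * tensorOps F G C D = tensorOps F G (A * C) (B * D) := by
  unfold tensorOps
  rw [Matrix.reindex_apply, Matrix.reindex_apply, Matrix.reindex_apply,
    Matrix.submatrix_mul_equiv, Matrix.mul_kronecker_mul]

lemma tensorOps_one : tensorOps F G 1 1 = 1 := by
  unfold tensorOps
  rw [Matrix.one_kronecker_one, Matrix.reindex_apply, Matrix.submatrix_one_equiv]

lemma star_tensorOps (A : Ops F) (B : Ops G) :
    star (tensorOps F G A B) = tensorOps F G (star A) (star B) := by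
  funext X Y
  rw [Matrix.star_apply, tensorOps_apply, tensorOps_apply, star_mul',
    Matrix.star_apply, Matrix.star_apply]

lemma tensorOps_localized {A : Ops F} {B : Ops G} {R R' : Set ι}
    (hA : Localized F A R) (hB : Localized G B R') :
    Localized (fun i => F i × G i) (tensorOps F G A B) (R ∪ R') := by
  constructor
  · intro X Y h0 i hi
    rw [tensorOps_apply] at h0
    rcases mul_ne_zero_iff.mp h0 with ⟨hA0, hB0⟩
    have h1 := hA.1 _ _ hA0 i (fun h => hi (Set.mem_union_left _ h))
    have h2 := hB.1 _ _ hB0 i (fun h => hi (Set.mem_union_right _ h))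
    exact Prod.ext h1 h2
  · intro X Y X' Y' hX hY hXY hX'Y'
    rw [tensorOps_apply, tensorOps_apply]
    have e1 : A (fun i => (X i).1) (fun i => (Y i).1)
        = A (fun i => (X' i).1) (fun i => (Y' i).1) := by
      refine localized_apply_eq' hA
        (fun i hi => congrArg Prod.fst (hX i (Set.mem_union_left _ hi)))
        (fun i hi => congrArg Prod.fst (hY i (Set.mem_union_left _ hi))) ?_
      intro i hi
      by_cases hi' : i ∈ R'
      · rw [hX i (Set.mem_union_right _ hi'), hY i (Set.mem_union_right _ hi')]
      · have h1 := hXY i (fun h => h.elim hi hi')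
        have h2 := hX'Y' i (fun h => h.elim hi hi')
        rw [h1, h2]
        simp
    have e2 : B (fun i => (X i).2) (fun i => (Y i).2)
        = B (fun i => (X' i).2) (fun i => (Y' i).2) := by
      refine localized_apply_eq' hB
        (fun i hi => congrArg Prod.snd (hX i (Set.mem_union_right _ hi)))
        (fun i hi => congrArg Prod.snd (hY i (Set.mem_union_right _ hi))) ?_
      intro i hi
      by_cases hi' : i ∈ R
      · rw [hX i (Set.mem_union_left _ hi'), hY i (Set.mem_union_left _ hi')]
      · have h1 := hXY i (fun h => h.elim hi' hi)
        have h2 := hX'Y' i (fun h => h.elim hi' hi)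
        rw [h1, h2]
        simp
    rw [e1, e2]

end Aux4
section Aux5
set_option linter.unusedSectionVars false

variable (N : ℕ) [NeZero N] (d : ZMod N → ℕ)

/-- The underlying permutation of configurations of `swapAt`. -/
def swapPermFun (n : ZMod N) (X : Conf (fun m : ZMod N => Fin (d m) × Fin (d m))) :
    Conf (fun m : ZMod N => Fin (d m) × Fin (d m)) :=
  Function.update X n (Prod.swap (X n))

lemma swapPermFun_involutive (n : ZMod N) : Function.Involutive (swapPermFun N d n) := by
  intro X
  funext m
  by_cases hm : m = n
  · subst hm
    simp [swapPermFun]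
  · simp [swapPermFun, Function.update_of_ne hm]

/-- The swap permutation as an `Equiv.Perm`. -/
def swapPerm (n : ZMod N) : Equiv.Perm (Conf (fun m : ZMod N => Fin (d m) × Fin (d m))) :=
  (swapPermFun_involutive N d n).toPerm

lemma swapAt_eq_permMat (n : ZMod N) : swapAt N d n = permMat (F := fun m : ZMod N => Fin (d m) × Fin (d m)) (swapPerm N d n) := by
  funext x y
  unfold swapAt permMat
  refine if_congr ?_ rfl rfl
  have hperm : (swapPerm N d n) y = Function.update y n (Prod.swap (y n)) := rfl
  rw [hperm]
  constructor
  · rintro ⟨h1, h2⟩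
    funext m
    by_cases hm : m = n
    · subst hm
      rw [h1]
      rw [Function.update_self]
    · rw [h2 m hm]
      exact (Function.update_of_ne hm _ _).symm
  · intro h
    rw [h]
    exact ⟨by rw [Function.update_self], fun m hm => Function.update_of_ne hm _ _⟩

/-- The global swap permutation. -/
def globPermFun (X : Conf (fun m : ZMod N => Fin (d m) × Fin (d m))) :
    Conf (fun m : ZMod N => Fin (d m) × Fin (d m)) :=
  fun m => Prod.swap (X m)

lemma globPermFun_involutive : Function.Involutive (globPermFun N d) := by
  intro X; funext m; simp [globPermFun]

def globPerm : Equiv.Perm (Conf (fun m : ZMod N => Fin (d m) × Fin (d m))) :=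
  (globPermFun_involutive N d).toPerm

lemma globalSwap_eq_permMat : globalSwap N d = permMat (F := fun m : ZMod N => Fin (d m) × Fin (d m)) (globPerm N d) := by
  funext x y
  unfold globalSwap permMat
  refine if_congr ?_ rfl rfl
  have hperm : (globPerm N d) y = fun m => Prod.swap (y m) := rfl
  rw [hperm]
  constructor
  · intro h; funext m; exact h m
  · intro h m; rw [h]

lemma swapAt_localized (n : ZMod N) :
    Localized (fun m : ZMod N => Fin (d m) × Fin (d m)) (swapAt N d n) {n} := by
  constructor
  · intro x y h0 i hi
    unfold swapAt at h0
    by_cases hc : x n = Prod.swap (y n) ∧ ∀ m, m ≠ n → x m = y m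
    · exact hc.2 i (by simpa using hi)
    · rw [if_neg hc] at h0
      exact absurd rfl h0
  · intro x y x' y' hx hy hxy hx'y'
    unfold swapAt
    refine if_congr ?_ rfl rfl
    have hxn : x n = x' n := hx n rfl
    have hyn : y n = y' n := hy n rfl
    constructor
    · rintro ⟨h1, -⟩
      exact ⟨by rw [← hxn, ← hyn]; exact h1, fun m hm => hx'y' m (by simpa using hm)⟩
    · rintro ⟨h1, -⟩
      exact ⟨by rw [hxn, hyn]; exact h1, fun m hm => hxy m (by simpa using hm)⟩

lemma swapAt_commute_localized {T : Ops (fun m : ZMod N => Fin (d m) × Fin (d m))}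
    {R : Set (ZMod N)} (hT : Localized _ T R) {n : ZMod N} (hn : n ∉ R) :
    Commute (swapAt N d n) T := by
  unfold Commute SemiconjBy
  rw [swapAt_eq_permMat, permMat_mul, mul_permMat]
  funext X Y
  show T (Function.update X n (Prod.swap (X n))) Y = T X (Function.update Y n (Prod.swap (Y n)))
  refine localized_apply_eq' hT
    (fun i hi => Function.update_of_ne (fun h => hn (by rw [← h]; exact hi)) _ _)
    (fun i hi => (Function.update_of_ne (fun h => hn (by rw [← h]; exact hi)) _ _).symm) ?_
  intro i hi
  by_cases hin : i = n
  · subst hin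
    rw [Function.update_self, Function.update_self]
    constructor
    · intro h; rw [← h, Prod.swap_swap]
    · intro h; rw [h, Prod.swap_swap]
  · rw [Function.update_of_ne hin, Function.update_of_ne hin]

end Aux5
section Aux6
set_option linter.unusedSectionVars false

variable (N : ℕ) [NeZero N] (d : ZMod N → ℕ)

/-- Product of the swaps over a finite set of sites. -/
noncomputable def partialSwap (s : Finset (ZMod N)) : Ops (fun m : ZMod N => Fin (d m) × Fin (d m)) :=
  fun x y => if (∀ m ∈ s, x m = Prod.swap (y m)) ∧ (∀ m ∉ s, x m = y m) then 1 else 0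

lemma partialSwap_empty : partialSwap N d ∅ = 1 := by
  funext x y
  unfold partialSwap
  rw [Matrix.one_apply]
  refine if_congr ?_ rfl rfl
  constructor
  · rintro ⟨-, h2⟩
    funext m
    exact h2 m (Finset.notMem_empty m)
  · intro h
    exact ⟨fun m hm => absurd hm (Finset.notMem_empty m), fun m _ => by rw [h]⟩

lemma partialSwap_univ : partialSwap N d Finset.univ = globalSwap N d := by
  funext x y
  unfold partialSwap globalSwap
  refine if_congr ?_ rfl rfl
  constructor
  · rintro ⟨h1, -⟩
    exact fun m => h1 m (Finset.mem_univ m)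
  · intro h
    exact ⟨fun m _ => h m, fun m hm => absurd (Finset.mem_univ m) hm⟩

lemma swapAt_mul_partialSwap (a : ZMod N) (s : Finset (ZMod N)) (ha : a ∉ s) :
    swapAt N d a * partialSwap N d s = partialSwap N d (insert a s) := by
  rw [swapAt_eq_permMat, permMat_mul]
  funext X Y
  show partialSwap N d s (Function.update X a (Prod.swap (X a))) Y = _
  unfold partialSwap
  refine if_congr ?_ rfl rfl
  constructor
  · rintro ⟨h1, h2⟩
    constructor
    · intro m hm
      rcases Finset.mem_insert.mp hm with hma | hms
      · subst hma
        have := h2 m ha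
        rw [Function.update_self] at this
        rw [← this, Prod.swap_swap]
      · have := h1 m hms
        rwa [Function.update_of_ne (fun h => ha (by rw [← h]; exact hms))] at this
    · intro m hm
      have hma : m ≠ a := fun h => hm (by rw [h]; exact Finset.mem_insert_self a s)
      have hms : m ∉ s := fun h => hm (Finset.mem_insert_of_mem h)
      have := h2 m hms
      rwa [Function.update_of_ne hma] at this
  · rintro ⟨h1, h2⟩
    constructor
    · intro m hms
      have hma : m ≠ a := fun h => ha (by rw [← h]; exact hms)
      rw [Function.update_of_ne hma]
      exact h1 m (Finset.mem_insert_of_mem hms)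
    · intro m hms
      by_cases hma : m = a
      · subst hma
        rw [Function.update_self]
        rw [h1 m (Finset.mem_insert_self m s), Prod.swap_swap]
      · rw [Function.update_of_ne hma]
        exact h2 m (by simp [Finset.mem_insert, hma, hms])

lemma noncommProd_swapAt (s : Finset (ZMod N)) :
    ∀ (hs : (↑s : Set (ZMod N)).Pairwise fun m n => Commute (swapAt N d m) (swapAt N d n)),
      s.noncommProd (swapAt N d) hs = partialSwap N d s := by
  induction s using Finset.induction_on with
  | empty => intro hs; rw [Finset.noncommProd_empty, partialSwap_empty]
  | @insert a s ha ih =>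
    intro hs
    rw [Finset.noncommProd_insert_of_notMem _ _ _ _ ha, ih _, swapAt_mul_partialSwap N d a s ha]

lemma globalSwap_mul_tensorOps (A B : Ops (fun m : ZMod N => Fin (d m))) :
    globalSwap N d * tensorOps _ _ A B = tensorOps _ _ B A * globalSwap N d := by
  rw [globalSwap_eq_permMat, permMat_mul, mul_permMat]
  funext X Y
  show tensorOps _ _ A B (fun m => Prod.swap (X m)) Y = tensorOps _ _ B A X (fun m => Prod.swap (Y m))
  rw [tensorOps_apply, tensorOps_apply]
  exact mul_comm _ _

lemma globalSwap_mul_globalSwap : globalSwap N d * globalSwap N d = 1 := by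
  rw [globalSwap_eq_permMat, permMat_mul_permMat]
  rw [show (globPerm N d).trans (globPerm N d) = Equiv.refl _ from
    Equiv.ext fun X => globPermFun_involutive N d X]
  exact permMat_refl

end Aux6
section Aux7a
set_option linter.unusedSectionVars false
variable {ι : Type} [Fintype ι] [DecidableEq ι]
variable {F : ι → Type} [∀ i, Fintype (F i)] [∀ i, DecidableEq (F i)]
variable {G : ι → Type} [∀ i, Fintype (G i)] [∀ i, DecidableEq (G i)]

lemma conj_mul_conj {V : Ops F} (h1 : star V * V = 1) (X Y : Ops F) :
    (V * X * star V) * (V * Y * star V) = V * (X * Y) * star V := by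
  calc (V * X * star V) * (V * Y * star V) = V * X * (star V * V) * Y * star V := by
        simp only [mul_assoc]
    _ = V * (X * Y) * star V := by rw [h1]; simp only [mul_assoc, one_mul]

lemma conj_recover {V : Ops F} (h2 : V * star V = 1) (B : Ops F) :
    V * (star V * B * V) * star V = B := by
  calc V * (star V * B * V) * star V = (V * star V) * B * (V * star V) := by
        simp only [mul_assoc]
    _ = B := by rw [h2, one_mul, mul_one]

lemma conj_commute_of {V A B : Ops F} (h1 : star V * V = 1) (h2 : V * star V = 1)
    (h : Commute A (star V * B * V)) : Commute (V * A * star V) B := by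
  have hB := conj_recover h2 B
  show (V * A * star V) * B = B * (V * A * star V)
  calc (V * A * star V) * B = (V * A * star V) * (V * (star V * B * V) * star V) := by rw [hB]
    _ = V * (A * (star V * B * V)) * star V := conj_mul_conj h1 _ _
    _ = V * ((star V * B * V) * A) * star V := by rw [h.eq]
    _ = (V * (star V * B * V) * star V) * (V * A * star V) := (conj_mul_conj h1 _ _).symm
    _ = B * (V * A * star V) := by rw [hB]

lemma embedAt_pair_decomp (i : ι) (B : Matrix (F i × G i) (F i × G i) ℂ) :
    embedAt (fun j => F j × G j) i B
      = ∑ a : F i, ∑ c : F i,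
          tensorOps F G (embedAt F i (Matrix.single a c 1))
            (embedAt G i (Matrix.of fun b e => B (a, b) (c, e))) := by
  funext X Y
  simp only [Matrix.sum_apply, tensorOps_apply, embedAt, Matrix.single, Matrix.of_apply]
  by_cases h : ∀ j, j ≠ i → X j = Y j
  · have h1 : ∀ j, j ≠ i → (X j).1 = (Y j).1 := fun j hj => congrArg Prod.fst (h j hj)
    have h2 : ∀ j, j ≠ i → (X j).2 = (Y j).2 := fun j hj => congrArg Prod.snd (h j hj)
    rw [if_pos h, if_pos h1, if_pos h2, one_mul]
    rw [Finset.sum_eq_single ((X i).1)]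
    · rw [Finset.sum_eq_single ((Y i).1)]
      · rw [if_pos ⟨rfl, rfl⟩]
        simp
      · intro c _ hc
        rw [if_neg (fun hco => hc hco.2)]
        simp
      · simp
    · intro a _ hane
      refine Finset.sum_eq_zero fun c _ => ?_
      rw [if_neg (fun hco => hane hco.1)]
      simp
    · simp
  · rw [if_neg h, zero_mul]
    symm
    refine Finset.sum_eq_zero fun a _ => Finset.sum_eq_zero fun c _ => ?_
    push_neg at h
    obtain ⟨j, hj, hne⟩ := h
    by_cases hfst : (X j).1 = (Y j).1
    · have hsnd : (X j).2 ≠ (Y j).2 := fun hp => hne (Prod.ext hfst hp)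
      rw [if_neg (show ¬ ∀ j, j ≠ i → (X j).2 = (Y j).2 from fun hc => hsnd (hc j hj))]
      simp
    · rw [if_neg (show ¬ ∀ j, j ≠ i → (X j).1 = (Y j).1 from fun hc => hfst (hc j hj))]
      simp

end Aux7a

section Aux7b
set_option linter.unusedSectionVars false
variable (N : ℕ) [NeZero N] (d : ZMod N → ℕ) (U : Ops (fun m : ZMod N => Fin (d m)))

lemma oneTensor_star_mul (h : star U * U = 1) :
    star (oneTensor N d U) * oneTensor N d U = 1 := by
  unfold oneTensor
  rw [star_tensorOps, star_one, tensorOps_mul, one_mul, h, tensorOps_one]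

lemma oneTensor_mul_star (h : U * star U = 1) :
    oneTensor N d U * star (oneTensor N d U) = 1 := by
  unfold oneTensor
  rw [star_tensorOps, star_one, tensorOps_mul, one_mul, h, tensorOps_one]

lemma conj_embed_localized (hU : IsRingQCA (fun m : ZMod N => Fin (d m)) (stdSector N) U)
    (i : ZMod N) (B : Matrix (Fin (d i) × Fin (d i)) (Fin (d i) × Fin (d i)) ℂ) :
    Localized (fun m : ZMod N => Fin (d m) × Fin (d m))
      (star (oneTensor N d U) * embedAt (fun m : ZMod N => Fin (d m) × Fin (d m)) i B *
        oneTensor N d U)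
      ({i - 1, i, i + 1} : Set (ZMod N)) := by
  rw [embedAt_pair_decomp]
  rw [show star (oneTensor N d U) *
        (∑ a : Fin (d i), ∑ c : Fin (d i),
          tensorOps _ _ (embedAt _ i (Matrix.single a c 1))
            (embedAt _ i (Matrix.of fun b e => B (a, b) (c, e)))) * oneTensor N d U
      = ∑ a : Fin (d i), ∑ c : Fin (d i),
          star (oneTensor N d U) *
            (tensorOps _ _ (embedAt _ i (Matrix.single a c 1))
              (embedAt _ i (Matrix.of fun b e => B (a, b) (c, e)))) * oneTensor N d U by
    simp [Finset.mul_sum, Finset.sum_mul]]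
  refine localized_sum fun a _ => localized_sum fun c _ => ?_
  have hVs : star (oneTensor N d U) = tensorOps _ _ 1 (star U) := by
    unfold oneTensor
    rw [star_tensorOps, star_one]
  have hcj : star (oneTensor N d U) *
      (tensorOps _ _ (embedAt _ i (Matrix.single a c 1))
        (embedAt _ i (Matrix.of fun b e => B (a, b) (c, e)))) * oneTensor N d U
      = tensorOps _ _ (embedAt _ i (Matrix.single a c 1))
          (star U * embedAt _ i (Matrix.of fun b e => B (a, b) (c, e)) * U) := by
    rw [hVs]
    unfold oneTensor
    rw [tensorOps_mul, tensorOps_mul, one_mul, mul_one]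
  rw [hcj]
  have hloc : Localized (fun m : ZMod N => Fin (d m)) (embedAt _ i (Matrix.of fun b e => B (a, b) (c, e)))
      (↑(stdSector N i) : Set (ZMod N)) := by
    rw [show ((stdSector N i : Finset (ZMod N)) : Set (ZMod N)) = {i} by simp [stdSector]]
    exact embedAt_localized i _
  have hh := hU.2 i _ hloc
  unfold heis at hh
  refine localized_mono ?_ (tensorOps_localized (embedAt_localized i _) hh)
  intro x hx
  simp only [stdSector, Finset.coe_singleton, Set.mem_union, Set.mem_singleton_iff] at hx
  simp only [Set.mem_insert_iff, Set.mem_singleton_iff]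
  tauto

end Aux7b
/-- For a nearest-neighbour QCA `U` on a ring of `N ≥ 5` sites, on the
doubled system one has `(U ⊗ 1)(1 ⊗ U)* = S ∏ₙ (1 ⊗ U) Sₙ (1 ⊗ U)*`; the conjugated swaps
pairwise commute and each is localized on (both copies of) the sites `{n-1, n, n+1}`.  In
particular `U ⊗ U*` is a finite-depth circuit of local unitaries. -/
theorem unitarity_causality_localizability (N : ℕ) [NeZero N] (hN : 5 ≤ N)
    (d : ZMod N → ℕ) (hd : ∀ n, 1 ≤ d n) (U : Ops (fun n : ZMod N => Fin (d n)))
    (hU : IsRingQCA (fun n : ZMod N => Fin (d n)) (stdSector N) U) :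
    (∀ n : ZMod N, swapAt N d n ∈ Matrix.unitaryGroup (Conf (fun n : ZMod N => Fin (d n) × Fin (d n))) ℂ) ∧
    tensorOps (fun n : ZMod N => Fin (d n)) (fun n : ZMod N => Fin (d n)) U (star U) = tensorOne N d U * star (oneTensor N d U) ∧
    (∀ m n : ZMod N, Commute (conjSwapAt N d U m) (conjSwapAt N d U n)) ∧
    (∀ n : ZMod N, Localized (fun n : ZMod N => Fin (d n) × Fin (d n)) (conjSwapAt N d U n) ({n - 1, n, n + 1} : Set (ZMod N))) ∧
    (∀ hs : ((Finset.univ : Finset (ZMod N)) : Set (ZMod N)).Pairwise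
        fun m n => Commute (swapAt N d m) (swapAt N d n),
      globalSwap N d = Finset.univ.noncommProd (swapAt N d) hs) ∧
    ∀ hc : ((Finset.univ : Finset (ZMod N)) : Set (ZMod N)).Pairwise
        fun m n => Commute (conjSwapAt N d U m) (conjSwapAt N d U n),
      tensorOne N d U * star (oneTensor N d U)
        = globalSwap N d * Finset.univ.noncommProd (conjSwapAt N d U) hc := by
  have hUu := Unitary.mem_iff.mp hU.1
  have h1 : star U * U = 1 := hUu.1
  have h2 : U * star U = 1 := hUu.2
  have hV1 := oneTensor_star_mul N d U h1
  have hV2 := oneTensor_mul_star N d U h2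
  have hswap_comm : ∀ m n : ZMod N, Commute (swapAt N d m) (swapAt N d n) := by
    intro m n
    by_cases hmn : m = n
    · subst hmn; exact Commute.refl _
    · exact (swapAt_commute_localized N d (swapAt_localized N d m)
        (by simpa using fun h => hmn h.symm)).symm
  have hconj_comm : ∀ m n : ZMod N, Commute (conjSwapAt N d U m) (conjSwapAt N d U n) := by
    intro m n
    show conjSwapAt N d U m * conjSwapAt N d U n = conjSwapAt N d U n * conjSwapAt N d U m
    unfold conjSwapAt
    rw [conj_mul_conj hV1, conj_mul_conj hV1, (hswap_comm m n).eq]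
  refine ⟨?_, ?_, hconj_comm, ?_, ?_, ?_⟩
  · intro n
    rw [swapAt_eq_permMat]
    exact permMat_mem_unitaryGroup _
  · unfold tensorOne oneTensor
    rw [star_tensorOps, star_one, tensorOps_mul, one_mul, mul_one]
  · intro n
    apply localized_of_commute
    intro i hi s t
    show Commute (conjSwapAt N d U n) _
    unfold conjSwapAt
    refine conj_commute_of hV1 hV2 ?_
    refine swapAt_commute_localized N d (conj_embed_localized N d U hU i _) ?_
    simp only [Set.mem_insert_iff, Set.mem_singleton_iff] at hi
    push_neg at hi
    simp only [Set.mem_insert_iff, Set.mem_singleton_iff]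
    push_neg
    refine ⟨fun h => hi.2.2 (by rw [h]; ring), fun h => hi.2.1 h.symm,
      fun h => hi.1 (by rw [h]; ring)⟩
  · intro hs
    rw [noncommProd_swapAt N d Finset.univ hs, partialSwap_univ]
  · intro hc
    have hφ : ∀ A B : Ops (fun m : ZMod N => Fin (d m) × Fin (d m)),
        (oneTensor N d U * A * star (oneTensor N d U)) *
          (oneTensor N d U * B * star (oneTensor N d U))
        = oneTensor N d U * (A * B) * star (oneTensor N d U) := conj_mul_conj hV1
    let φ : Ops (fun m : ZMod N => Fin (d m) × Fin (d m)) →*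
        Ops (fun m : ZMod N => Fin (d m) × Fin (d m)) :=
      { toFun := fun A => oneTensor N d U * A * star (oneTensor N d U)
        map_one' := by show oneTensor N d U * 1 * star (oneTensor N d U) = 1
                       rw [mul_one]; exact hV2
        map_mul' := fun A B => (hφ A B).symm }
    have hs' : ((Finset.univ : Finset (ZMod N)) : Set (ZMod N)).Pairwise
        fun m n => Commute (swapAt N d m) (swapAt N d n) := fun m _ n _ _ => hswap_comm m n
    have hmap := Finset.map_noncommProd Finset.univ (swapAt N d) hs' φ
    have hPS : Finset.univ.noncommProd (conjSwapAt N d U) hc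
        = oneTensor N d U * globalSwap N d * star (oneTensor N d U) := by
      have hfun : Finset.univ.noncommProd (conjSwapAt N d U) hc
          = Finset.univ.noncommProd (fun i => φ (swapAt N d i))
            (fun m hm n hn hmn => (hs' hm hn hmn).map φ) := rfl
      rw [hfun, ← hmap, noncommProd_swapAt N d Finset.univ hs', partialSwap_univ]
      rfl
    rw [hPS]
    have hSV : globalSwap N d * oneTensor N d U = tensorOne N d U * globalSwap N d := by
      unfold oneTensor tensorOne
      exact globalSwap_mul_tensorOps N d 1 U
    calc tensorOne N d U * star (oneTensor N d U)
        = tensorOne N d U * (globalSwap N d * globalSwap N d) * star (oneTensor N d U) := by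
          rw [globalSwap_mul_globalSwap, mul_one]
      _ = (tensorOne N d U * globalSwap N d) * (globalSwap N d * star (oneTensor N d U)) := by
          simp only [mul_assoc]
      _ = (globalSwap N d * oneTensor N d U) * (globalSwap N d * star (oneTensor N d U)) := by
          rw [hSV]
      _ = globalSwap N d * (oneTensor N d U * globalSwap N d * star (oneTensor N d U)) := by
          simp only [mul_assoc]

end QCA
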